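/- On the Lie algebra g_t (for every real t ≠ 0), the torsion 3-form T = −(1/t)(3e₁₃₅ + e₁₄₆ + e₂₃₆ + e₂₄₅) is parallel with respect to its torsion connection ∇: (∇_X T)(Y,Z,V) = 0 for all X,Y,Z,V. -/
import Mathlib


open scoped BigOperators

noncomputable section

/-- The standard inner product on ℝ⁶. -/
def gIP (X Y : Fin 6 → ℝ) : ℝ := ∑ i, X i * Y i

/-- The standard orthonormal basis e₁,…,e₆ (0-indexed). -/
def e (i : Fin 6) : Fin 6 → ℝ := fun j => if j = i then 1 else 0

/-- The 2-form e_{ij} (0-indexed). -/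
def two (i j : Fin 6) (X Y : Fin 6 → ℝ) : ℝ := X i * Y j - X j * Y i

/-- The 3-form e_{ijk} (0-indexed). -/
def three (i j k : Fin 6) (X Y Z : Fin 6 → ℝ) : ℝ :=
  X i * (Y j * Z k - Y k * Z j) - X j * (Y i * Z k - Y k * Z i) + X k * (Y i * Z j - Y j * Z i)

/-- The 4-form e_{ijkl} (0-indexed). -/
def four (i j k l : Fin 6) (X Y Z W : Fin 6 → ℝ) : ℝ :=
  X i * three j k l Y Z W - X j * three i k l Y Z W
    + X k * three i j l Y Z W - X l * three i j k Y Z W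

/-- F = −e₁₂ − e₃₄ − e₅₆. -/
def Fform (X Y : Fin 6 → ℝ) : ℝ := -two 0 1 X Y - two 2 3 X Y - two 4 5 X Y

/-- Ψ⁺ = −e₁₃₅ + e₂₃₆ + e₁₄₆ + e₂₄₅. -/
def Psip (X Y Z : Fin 6 → ℝ) : ℝ :=
  -three 0 2 4 X Y Z + three 1 2 5 X Y Z + three 0 3 5 X Y Z + three 1 3 4 X Y Z

/-- Ψ⁻ = −e₁₃₆ − e₁₄₅ − e₂₃₅ + e₂₄₆. -/
def Psim (X Y Z : Fin 6 → ℝ) : ℝ :=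
  -three 0 2 5 X Y Z - three 0 3 4 X Y Z - three 1 2 4 X Y Z + three 1 3 5 X Y Z

/-- Φ(X,Y,Z,V) = F(X,Y)F(Z,V) + F(Y,Z)F(X,V) + F(Z,X)F(Y,V). -/
def Phi (X Y Z V : Fin 6 → ℝ) : ℝ :=
  Fform X Y * Fform Z V + Fform Y Z * Fform X V + Fform Z X * Fform Y V

/-- The orthogonal complex structure: Je₁=e₂, Je₂=−e₁, Je₃=e₄, Je₄=−e₃, Je₅=e₆, Je₆=−e₅. -/
def Jc (X : Fin 6 → ℝ) : Fin 6 → ℝ := ![-X 1, X 0, -X 3, X 2, -X 5, X 4]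

/-- Θ⁺ = e₁₃₅ − e₁₄₆ − e₂₃₆ − e₂₄₅. -/
def Thp (X Y Z : Fin 6 → ℝ) : ℝ :=
  three 0 2 4 X Y Z - three 0 3 5 X Y Z - three 1 2 5 X Y Z - three 1 3 4 X Y Z

/-- Θ⁻ = e₁₃₆ + e₁₄₅ + e₂₃₅ − e₂₄₆. -/
def Thm (X Y Z : Fin 6 → ℝ) : ℝ :=
  three 0 2 5 X Y Z + three 0 3 4 X Y Z + three 1 2 4 X Y Z - three 1 3 5 X Y Z

/-- Nijenhuis tensor N(X,Y) = [JX,JY] − [X,Y] − J[JX,Y] − J[X,JY] for a bracket `br`. -/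
def Nij (br : (Fin 6 → ℝ) → (Fin 6 → ℝ) → (Fin 6 → ℝ)) (X Y : Fin 6 → ℝ) : Fin 6 → ℝ :=
  br (Jc X) (Jc Y) - br X Y - Jc (br (Jc X) Y) - Jc (br X (Jc Y))

/-- Chevalley–Eilenberg differential of a 2-form. -/
def d2 (br : (Fin 6 → ℝ) → (Fin 6 → ℝ) → (Fin 6 → ℝ))
    (α : (Fin 6 → ℝ) → (Fin 6 → ℝ) → ℝ) (X Y Z : Fin 6 → ℝ) : ℝ :=
  -α (br X Y) Z + α (br X Z) Y - α (br Y Z) X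

/-- Chevalley–Eilenberg differential of a 3-form. -/
def d3 (br : (Fin 6 → ℝ) → (Fin 6 → ℝ) → (Fin 6 → ℝ))
    (α : (Fin 6 → ℝ) → (Fin 6 → ℝ) → (Fin 6 → ℝ) → ℝ) (X Y Z W : Fin 6 → ℝ) : ℝ :=
  -α (br X Y) Z W + α (br X Z) Y W - α (br X W) Y Z
    - α (br Y Z) X W + α (br Y W) X Z - α (br Z W) X Y

/-- The torsion connection ∇ associated with a bracket `br` and a 3-form `T`:
g(∇_X Y, Z) = ½( g([X,Y],Z) − g([Y,Z],X) + g([Z,X],Y) + T(X,Y,Z) ). -/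
def nab (br : (Fin 6 → ℝ) → (Fin 6 → ℝ) → (Fin 6 → ℝ))
    (T : (Fin 6 → ℝ) → (Fin 6 → ℝ) → (Fin 6 → ℝ) → ℝ)
    (X Y : Fin 6 → ℝ) : Fin 6 → ℝ :=
  fun m => (1/2) * (gIP (br X Y) (e m) - gIP (br Y (e m)) X + gIP (br (e m) X) Y + T X Y (e m))

/-- The covariant derivative of a 3-form α:
(∇_X α)(Y,Z,V) = −α(∇_X Y,Z,V) − α(Y,∇_X Z,V) − α(Y,Z,∇_X V). -/
def nabForm3 (br : (Fin 6 → ℝ) → (Fin 6 → ℝ) → (Fin 6 → ℝ))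
    (T α : (Fin 6 → ℝ) → (Fin 6 → ℝ) → (Fin 6 → ℝ) → ℝ)
    (X Y Z V : Fin 6 → ℝ) : ℝ :=
  -α (nab br T X Y) Z V - α Y (nab br T X Z) V - α Y Z (nab br T X V)

/-- Curvature R(X,Y)Z = ∇_X∇_Y Z − ∇_Y∇_X Z − ∇_{[X,Y]}Z. -/
def Rmap (br : (Fin 6 → ℝ) → (Fin 6 → ℝ) → (Fin 6 → ℝ))
    (T : (Fin 6 → ℝ) → (Fin 6 → ℝ) → (Fin 6 → ℝ) → ℝ)
    (X Y Z : Fin 6 → ℝ) : Fin 6 → ℝ :=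
  nab br T X (nab br T Y Z) - nab br T Y (nab br T X Z) - nab br T (br X Y) Z

/-- R(X,Y,Z,V) = g(R(X,Y)Z,V). -/
def R4 (br : (Fin 6 → ℝ) → (Fin 6 → ℝ) → (Fin 6 → ℝ))
    (T : (Fin 6 → ℝ) → (Fin 6 → ℝ) → (Fin 6 → ℝ) → ℝ)
    (X Y Z V : Fin 6 → ℝ) : ℝ :=
  gIP (Rmap br T X Y Z) V

/-- The Lie bracket of g_t (so(3,1) underlying sl(2,ℂ)), bilinear extension of
[e₃,e₅]=−(1/t)e₁, [e₄,e₆]=(1/t)e₁, [e₃,e₆]=−(1/t)e₂, [e₄,e₅]=−(1/t)e₂,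
[e₁,e₅]=(1/t)e₃, [e₂,e₆]=−(1/t)e₃, [e₁,e₆]=(1/t)e₄, [e₂,e₅]=(1/t)e₄,
[e₁,e₃]=−(1/t)e₅, [e₂,e₄]=(1/t)e₅, [e₁,e₄]=−(1/t)e₆, [e₂,e₃]=−(1/t)e₆. -/
def brG (t : ℝ) (X Y : Fin 6 → ℝ) : Fin 6 → ℝ :=
  (-(1 / t) * two 2 4 X Y + (1 / t) * two 3 5 X Y) • e 0
    + (-(1 / t) * two 2 5 X Y + -(1 / t) * two 3 4 X Y) • e 1
    + ((1 / t) * two 0 4 X Y + -(1 / t) * two 1 5 X Y) • e 2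
    + ((1 / t) * two 0 5 X Y + (1 / t) * two 1 4 X Y) • e 3
    + (-(1 / t) * two 0 2 X Y + (1 / t) * two 1 3 X Y) • e 4
    + (-(1 / t) * two 0 3 X Y + -(1 / t) * two 1 2 X Y) • e 5

/-- The torsion 3-form T = −(1/t)(3e₁₃₅ + e₁₄₆ + e₂₃₆ + e₂₄₅) on g_t. -/
def TG (t : ℝ) (X Y Z : Fin 6 → ℝ) : ℝ :=
  -(1 / t) * (3 * three 0 2 4 X Y Z + three 0 3 5 X Y Z
    + three 1 2 5 X Y Z + three 1 3 4 X Y Z)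

set_option maxHeartbeats 2000000 in
lemma nab0 (t : ℝ) (X Y : Fin 6 → ℝ) : nab (brG t) (TG t) X Y 0 = -2*(1/t)*(X 2 * Y 4 - X 4 * Y 2) := by
  simp [nab, brG, TG, gIP, two, three, e, Fin.sum_univ_six]
  ring

set_option maxHeartbeats 2000000 in
lemma nab1 (t : ℝ) (X Y : Fin 6 → ℝ) : nab (brG t) (TG t) X Y 1 = -2*(1/t)*(X 2 * Y 5 - X 4 * Y 3) := by
  simp [nab, brG, TG, gIP, two, three, e, Fin.sum_univ_six]
  ring

set_option maxHeartbeats 2000000 in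
lemma nab2 (t : ℝ) (X Y : Fin 6 → ℝ) : nab (brG t) (TG t) X Y 2 = 2*(1/t)*(X 0 * Y 4 - X 4 * Y 0) := by
  simp [nab, brG, TG, gIP, two, three, e, Fin.sum_univ_six]
  ring

set_option maxHeartbeats 2000000 in
lemma nab3 (t : ℝ) (X Y : Fin 6 → ℝ) : nab (brG t) (TG t) X Y 3 = 2*(1/t)*(X 0 * Y 5 - X 4 * Y 1) := by
  simp [nab, brG, TG, gIP, two, three, e, Fin.sum_univ_six]
  ring

set_option maxHeartbeats 2000000 in
lemma nab4 (t : ℝ) (X Y : Fin 6 → ℝ) : nab (brG t) (TG t) X Y 4 = -2*(1/t)*(X 0 * Y 2 - X 2 * Y 0) := by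
  simp [nab, brG, TG, gIP, two, three, e, Fin.sum_univ_six]
  ring

set_option maxHeartbeats 2000000 in
lemma nab5 (t : ℝ) (X Y : Fin 6 → ℝ) : nab (brG t) (TG t) X Y 5 = -2*(1/t)*(X 0 * Y 3 - X 2 * Y 1) := by
  simp [nab, brG, TG, gIP, two, three, e, Fin.sum_univ_six]
  ring

/-- on g_t (t ≠ 0), T = −(1/t)(3e₁₃₅ + e₁₄₆ + e₂₃₆ + e₂₄₅) is ∇-parallel. -/
theorem stmt13 (t : ℝ) (ht : t ≠ 0) :
    ∀ X Y Z V : Fin 6 → ℝ, nabForm3 (brG t) (TG t) (TG t) X Y Z V = 0 := by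
  intro X Y Z V
  simp only [nabForm3, TG, three, nab0, nab1, nab2, nab3, nab4, nab5]
  ring
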